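/- Let $I \subset \mathbb{R}$ be an interval of positive finite length $|I|$, and for $\alpha \in \mathbb{Z}$ let $I(\alpha) = [|I|\alpha - |I|/2, |I|\alpha + |I|/2)$. If $f : \mathbb{R} \to \mathbb{C}$ is continuously differentiable with $f, f' \in L^2(\mathbb{R})$, then $\sum_{\alpha \in \mathbb{Z}} \sup_{x \in I(\alpha)} |f(x)|^2 \le 2\left(\frac{1}{|I|}\int_{\mathbb{R}}|f|^2 + |I|\int_{\mathbb{R}}|f'|^2\right)$. -/

import Mathlib

open MeasureTheory

/-- Sledd–Stegenga 1D summed lemma: for intervals `I(α) = [Lα - L/2, Lα + L/2)`, `α ∈ ℤ`,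
of common length `L > 0`, and `f : ℝ → ℂ` continuously differentiable with
`f, f' ∈ L²(ℝ)`,
`∑_{α ∈ ℤ} sup_{x ∈ I(α)} |f x|² ≤ 2 ((1/L) ∫_ℝ |f|² + L ∫_ℝ |f'|²)`. -/
theorem stmt_1 (L : ℝ) (hL : 0 < L) (f : ℝ → ℂ) (hf : ContDiff ℝ 1 f)
    (hf2 : MemLp f 2 volume) (hf'2 : MemLp (deriv f) 2 volume) :
    ∑' α : ℤ, ⨆ x ∈ Set.Ico (L * α - L / 2) (L * α + L / 2), ‖f x‖ ^ 2 ≤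
      2 * (L⁻¹ * (∫ t, ‖f t‖ ^ 2) + L * ∫ t, ‖deriv f t‖ ^ 2) := by
  have hfd : Differentiable ℝ f := hf.differentiable one_ne_zero
  have hfc : Continuous f := hfd.continuous
  have hf'c : Continuous (deriv f) := hf.continuous_deriv le_rfl
  set g : ℝ → ℝ := fun t => ‖f t‖ ^ 2 with hgdef
  set r : ℝ → ℝ := fun t => ‖deriv f t‖ ^ 2 with hrdef
  set g' : ℝ → ℝ := fun t =>
    2 * ((f t).re * (deriv f t).re + (f t).im * (deriv f t).im) with hg'def
  have hgc : Continuous g := (hfc.norm.pow 2)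
  have hrc : Continuous r := (hf'c.norm.pow 2)
  have hg'c : Continuous g' := by
    apply Continuous.mul continuous_const
    exact ((Complex.continuous_re.comp hfc).mul (Complex.continuous_re.comp hf'c)).add
      ((Complex.continuous_im.comp hfc).mul (Complex.continuous_im.comp hf'c))
  have hg : ∀ t, HasDerivAt g (g' t) t := by
    intro t
    have h1 : HasDerivAt f (deriv f t) t := (hfd t).hasDerivAt
    have hre : HasDerivAt (fun s => (f s).re) ((deriv f t).re) t :=
      (Complex.reCLM.hasFDerivAt.comp_hasDerivAt t h1)
    have him : HasDerivAt (fun s => (f s).im) ((deriv f t).im) t :=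
      (Complex.imCLM.hasFDerivAt.comp_hasDerivAt t h1)
    have h2 := (hre.mul hre).add (him.mul him)
    have heq : g = fun s => (f s).re * (f s).re + (f s).im * (f s).im := by
      funext s
      rw [hgdef]
      simp [Complex.sq_norm, Complex.normSq_apply]
    rw [heq]
    refine h2.congr_deriv ?_
    rw [hg'def]; ring
  have hbound : ∀ t, |g' t| ≤ 2 * (‖f t‖ * ‖deriv f t‖) := by
    intro t
    have h1 : g' t = 2 * ((starRingEnd ℂ) (f t) * deriv f t).re := by
      rw [hg'def]; simp only [Complex.mul_re, Complex.conj_re, Complex.conj_im]; ring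
    have h2 := Complex.abs_re_le_norm ((starRingEnd ℂ) (f t) * deriv f t)
    have h3 : ‖(starRingEnd ℂ) (f t) * deriv f t‖ = ‖f t‖ * ‖deriv f t‖ := by
      rw [norm_mul, Complex.norm_conj]
    rw [h1, abs_mul, abs_two]
    nlinarith [abs_nonneg (((starRingEnd ℂ) (f t) * deriv f t).re)]
  -- global integrability
  have hq : Integrable g volume := by
    have h := hf2.integrable_norm_rpow two_ne_zero ENNReal.ofNat_ne_top
    simpa [hgdef, ENNReal.toReal_ofNat, Real.rpow_two] using h
  have hr : Integrable r volume := by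
    have h := hf'2.integrable_norm_rpow two_ne_zero ENNReal.ofNat_ne_top
    simpa [hrdef, ENNReal.toReal_ofNat, Real.rpow_two] using h
  set S : ℤ → Set ℝ := fun α => Set.Ico (L * α - L / 2) (L * α + L / 2) with hSdef
  have hmeas : ∀ α : ℤ, MeasurableSet (S α) := fun α => measurableSet_Ico
  have hdisj : Pairwise (Function.onFun Disjoint S) := by
    have key : ∀ α β : ℤ, α < β → Disjoint (S α) (S β) := by
      intro α β h
      rw [hSdef]
      rw [Set.Ico_disjoint_Ico]
      have h1 : (α : ℝ) + 1 ≤ β := by exact_mod_cast h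
      calc min (L * α + L / 2) (L * β + L / 2) ≤ L * α + L / 2 := min_le_left _ _
        _ ≤ L * β - L / 2 := by nlinarith
        _ ≤ max (L * α - L / 2) (L * β - L / 2) := le_max_right _ _
    intro α β hne
    rcases hne.lt_or_gt with h | h
    · exact key _ _ h
    · exact (key _ _ h).symm
  have hunion : ⋃ α : ℤ, S α = Set.univ := by
    ext x
    simp only [Set.mem_iUnion, Set.mem_univ, iff_true, hSdef, Set.mem_Ico]
    refine ⟨⌊x / L + 1 / 2⌋, ?_, ?_⟩
    · have h := Int.floor_le (x / L + 1 / 2)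
      have hx : x / L * L = x := div_mul_cancel₀ x hL.ne'
      nlinarith [mul_le_mul_of_nonneg_right h hL.le]
    · have h := Int.lt_floor_add_one (x / L + 1 / 2)
      have hx : x / L * L = x := div_mul_cancel₀ x hL.ne'
      nlinarith [mul_lt_mul_of_pos_right h hL]
  have hSg : HasSum (fun α => ∫ t in S α, g t) (∫ t, g t) := by
    have := hasSum_integral_iUnion (μ := volume) (f := g) hmeas hdisj
      (by rw [hunion]; exact hq.integrableOn)
    rwa [hunion, setIntegral_univ] at this
  have hSr : HasSum (fun α => ∫ t in S α, r t) (∫ t, r t) := by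
    have := hasSum_integral_iUnion (μ := volume) (f := r) hmeas hdisj
      (by rw [hunion]; exact hr.integrableOn)
    rwa [hunion, setIntegral_univ] at this
  -- per-interval bound
  have key : ∀ α : ℤ, (⨆ x ∈ Set.Ico (L * (α : ℝ) - L / 2) (L * α + L / 2), g x) ≤
      2 * L⁻¹ * (∫ t in S α, g t) + L * (∫ t in S α, r t) := by
    intro α
    set a : ℝ := L * α - L / 2 with hadef
    set b : ℝ := L * α + L / 2 with hbdef
    have hSa : S α = Set.Ico a b := by rw [hSdef]
    rw [hSa]
    have hab : a ≤ b := by rw [hadef, hbdef]; linarith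
    have hgI : IntegrableOn g (Set.Ico a b) volume :=
      (hgc.integrableOn_Icc).mono_set Set.Ico_subset_Icc_self
    have hrI : IntegrableOn r (Set.Ico a b) volume :=
      (hrc.integrableOn_Icc).mono_set Set.Ico_subset_Icc_self
    have hg'I : IntegrableOn (fun t => |g' t|) (Set.Ico a b) volume :=
      (hg'c.abs.integrableOn_Icc).mono_set Set.Ico_subset_Icc_self
    have hIg0 : 0 ≤ ∫ t in Set.Ico a b, g t :=
      setIntegral_nonneg measurableSet_Ico (fun t _ => by rw [hgdef]; positivity)
    have hIr0 : 0 ≤ ∫ t in Set.Ico a b, r t :=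
      setIntegral_nonneg measurableSet_Ico (fun t _ => by rw [hrdef]; positivity)
    set D : ℝ := ∫ t in Set.Ico a b, |g' t| with hDdef
    have hD : D ≤ L⁻¹ * (∫ t in Set.Ico a b, g t) + L * (∫ t in Set.Ico a b, r t) := by
      have step : D ≤ ∫ t in Set.Ico a b, (L⁻¹ * g t + L * r t) := by
        apply setIntegral_mono_on hg'I ((hgI.const_mul _).add (hrI.const_mul _))
          measurableSet_Ico
        intro t _
        have h1 := hbound t
        have h2 : 2 * (‖f t‖ * ‖deriv f t‖) ≤ L⁻¹ * g t + L * r t := by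
          have heq : L⁻¹ * g t + L * r t - 2 * (‖f t‖ * ‖deriv f t‖) =
              (‖f t‖ - L * ‖deriv f t‖) ^ 2 / L := by
            rw [hgdef, hrdef]; field_simp; ring
          nlinarith [div_nonneg (sq_nonneg (‖f t‖ - L * ‖deriv f t‖)) hL.le]
        exact h1.trans h2
      rw [integral_add (hgI.const_mul _) (hrI.const_mul _),
        integral_const_mul, integral_const_mul] at step
      exact step
    have hgxy : ∀ x ∈ Set.Ico a b, ∀ y ∈ Set.Ico a b, g x ≤ g y + D := by
      intro x hx y hy
      have hftc : ∫ t in y..x, g' t = g x - g y :=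
        intervalIntegral.integral_eq_sub_of_hasDerivAt (fun t _ => hg t)
          (hg'c.intervalIntegrable y x)
      have h1 : |∫ t in y..x, g' t| ≤ ∫ t in Set.uIoc y x, |g' t| := by
        simpa [Real.norm_eq_abs] using
          intervalIntegral.norm_integral_le_integral_norm_uIoc (f := g') (a := y) (b := x)
            (μ := volume)
      have hsub : Set.uIoc y x ⊆ Set.Ico a b := by
        intro t ht
        rw [Set.uIoc, Set.mem_Ioc] at ht
        obtain ⟨hya, hyb⟩ := Set.mem_Ico.1 hy
        obtain ⟨hxa, hxb⟩ := Set.mem_Ico.1 hx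
        refine Set.mem_Ico.2 ⟨?_, ?_⟩
        · exact le_of_lt (lt_of_le_of_lt (le_min hya hxa) ht.1)
        · exact lt_of_le_of_lt ht.2 (max_lt hyb hxb)
      have h2 : ∫ t in Set.uIoc y x, |g' t| ≤ D := by
        rw [hDdef]
        exact setIntegral_mono_set hg'I (ae_of_all _ fun t => abs_nonneg _)
          (HasSubset.Subset.eventuallyLE hsub)
      have h3 : g x - g y ≤ D := by
        calc g x - g y = ∫ t in y..x, g' t := hftc.symm
          _ ≤ |∫ t in y..x, g' t| := le_abs_self _
          _ ≤ ∫ t in Set.uIoc y x, |g' t| := h1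
          _ ≤ D := h2
      linarith
    have hpt : ∀ x ∈ Set.Ico a b, g x ≤ L⁻¹ * (∫ t in Set.Ico a b, g t) + D := by
      intro x hx
      have hvol : (volume (Set.Ico a b)).toReal = L := by
        rw [Real.volume_Ico, hadef, hbdef, ENNReal.toReal_ofReal (by linarith)]
        ring
      have hmono : ∫ _ in Set.Ico a b, (g x - D) ≤ ∫ y in Set.Ico a b, g y := by
        apply setIntegral_mono_on _ hgI measurableSet_Ico
        · intro y hy; linarith [hgxy x hx y hy]
        · exact integrableOn_const (measure_Ico_lt_top).ne
      rw [setIntegral_const, measureReal_def, hvol, smul_eq_mul] at hmono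
      have hstep := mul_le_mul_of_nonneg_left hmono (inv_nonneg.2 hL.le)
      rw [← mul_assoc, inv_mul_cancel₀ hL.ne', one_mul] at hstep
      linarith
    have hB0 : 0 ≤ 2 * L⁻¹ * (∫ t in Set.Ico a b, g t) + L * (∫ t in Set.Ico a b, r t) := by
      have h1 : (0:ℝ) ≤ 2 * L⁻¹ := by positivity
      nlinarith
    refine Real.iSup_le (fun x => Real.iSup_le (fun hx => ?_) hB0) hB0
    have h1 := hpt x hx
    linarith
  have hB : HasSum (fun α : ℤ => 2 * L⁻¹ * (∫ t in S α, g t) + L * (∫ t in S α, r t))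
      (2 * L⁻¹ * (∫ t, g t) + L * (∫ t, r t)) := (hSg.mul_left _).add (hSr.mul_left _)
  have hnn : ∀ α : ℤ, 0 ≤ ⨆ x ∈ Set.Ico (L * (α : ℝ) - L / 2) (L * α + L / 2), g x :=
    fun α => Real.iSup_nonneg fun x => Real.iSup_nonneg fun _ => by rw [hgdef]; positivity
  have hsum : Summable (fun α : ℤ => ⨆ x ∈ Set.Ico (L * (α : ℝ) - L / 2) (L * α + L / 2), g x) :=
    Summable.of_nonneg_of_le hnn key hB.summable
  calc ∑' α : ℤ, ⨆ x ∈ Set.Ico (L * (α : ℝ) - L / 2) (L * α + L / 2), g x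
      ≤ ∑' α : ℤ, (2 * L⁻¹ * (∫ t in S α, g t) + L * (∫ t in S α, r t)) :=
        Summable.tsum_le_tsum key hsum hB.summable
    _ = 2 * L⁻¹ * (∫ t, g t) + L * (∫ t, r t) := hB.tsum_eq
    _ ≤ 2 * (L⁻¹ * (∫ t, g t) + L * (∫ t, r t)) := by
        have h0 : 0 ≤ ∫ t, r t := integral_nonneg fun t => by rw [hrdef]; positivity
        nlinarith [mul_nonneg hL.le h0]
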